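/- For fixed Δx > 0 and α ∈ ℝⁿ, the function ξ(t) = e^{iα·x}(\hat{f}·cos(β₀ t) + \hat{g}·sin(β₀ t)/β₀) (constants \hat{f}, \hat{g} ∈ ℂ, β₀ > 0) satisfies the semidiscrete equation ξ''(t) = Σ_{k=1}^n δ_{k,Δx}^{-1}∘δ_{k,Δx} ξ(t) at every point x ∈ ℝⁿ, where β₀² = Σ_{k=1}^n (sin²(α_k Δx/2)/(α_k Δx/2)²)α_k², with initial conditions ξ(0) = \hat{f}e^{iα·x} and ξ'(0) = \hat{g}e^{iα·x}. -/

import Mathlib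

open Complex

lemma aux_c1 (β₀ : ℝ) (hβ : β₀ ≠ 0) (fh gh : ℂ) (t : ℝ) :
    HasDerivAt (fun s : ℝ => fh * ((Real.cos (β₀ * s) : ℝ) : ℂ) +
        gh * ((Real.sin (β₀ * s) / β₀ : ℝ) : ℂ))
      (fh * ((-(β₀ * Real.sin (β₀ * t)) : ℝ) : ℂ) +
        gh * ((Real.cos (β₀ * t) : ℝ) : ℂ)) t := by
  have hid : HasDerivAt (fun s : ℝ => β₀ * s) β₀ t := by
    simpa using (hasDerivAt_id t).const_mul β₀
  have hcos : HasDerivAt (fun s : ℝ => Real.cos (β₀ * s)) (-(β₀ * Real.sin (β₀ * t))) t := by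
    have := (Real.hasDerivAt_cos (β₀ * t)).comp t hid
    exact this.congr_deriv (by ring)
  have hsin : HasDerivAt (fun s : ℝ => Real.sin (β₀ * s) / β₀) (Real.cos (β₀ * t)) t := by
    have := ((Real.hasDerivAt_sin (β₀ * t)).comp t hid).div_const β₀
    simpa [mul_div_assoc, hβ] using this
  exact (hcos.ofReal_comp.const_mul fh).add (hsin.ofReal_comp.const_mul gh)

lemma aux_c2 (β₀ : ℝ) (hβ : β₀ ≠ 0) (fh gh : ℂ) (t : ℝ) :
    HasDerivAt (fun s : ℝ => fh * ((-(β₀ * Real.sin (β₀ * s)) : ℝ) : ℂ) +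
        gh * ((Real.cos (β₀ * s) : ℝ) : ℂ))
      (-(β₀ : ℂ) ^ 2 * (fh * ((Real.cos (β₀ * t) : ℝ) : ℂ) +
        gh * ((Real.sin (β₀ * t) / β₀ : ℝ) : ℂ))) t := by
  have hβC : (β₀ : ℂ) ≠ 0 := Complex.ofReal_ne_zero.mpr hβ
  have hid : HasDerivAt (fun s : ℝ => β₀ * s) β₀ t := by
    simpa using (hasDerivAt_id t).const_mul β₀
  have hcos : HasDerivAt (fun s : ℝ => Real.cos (β₀ * s)) (-(β₀ * Real.sin (β₀ * t))) t := by
    have := (Real.hasDerivAt_cos (β₀ * t)).comp t hid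
    exact this.congr_deriv (by ring)
  have hsin : HasDerivAt (fun s : ℝ => -(β₀ * Real.sin (β₀ * s)))
      (-(β₀ * (Real.cos (β₀ * t) * β₀))) t := by
    have := (((Real.hasDerivAt_sin (β₀ * t)).comp t hid).const_mul β₀).neg
    exact this.congr_deriv (by ring)
  have h := (hsin.ofReal_comp.const_mul fh).add (hcos.ofReal_comp.const_mul gh)
  refine h.congr_deriv ?_
  push_cast
  field_simp
  ring

theorem stmt11 (n : ℕ) (hn : 1 ≤ n) (Δx : ℝ) (hΔx : 0 < Δx)
    (α : Fin n → ℝ) (hα : ∀ k, α k ≠ 0) (β₀ : ℝ) (hβ₀ : 0 < β₀)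
    (hdisp : β₀ ^ 2 = ∑ k, (Real.sin (α k * Δx / 2) ^ 2 / (α k * Δx / 2) ^ 2) * (α k) ^ 2)
    (fh gh : ℂ)
    (ξ : ℝ → (Fin n → ℝ) → ℂ)
    (hξ : ∀ t x, ξ t x = Complex.exp (Complex.I * ((∑ j, α j * x j : ℝ))) *
      (fh * ((Real.cos (β₀ * t) : ℝ) : ℂ) +
       gh * ((Real.sin (β₀ * t) / β₀ : ℝ) : ℂ))) :
    (∀ (x : Fin n → ℝ) (t : ℝ),
        iteratedDeriv 2 (fun s => ξ s x) t =
          ∑ k, (ξ t (x + Δx • (Pi.single k 1 : Fin n → ℝ)) - 2 * ξ t x +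
                  ξ t (x - Δx • (Pi.single k 1 : Fin n → ℝ))) / (Δx : ℂ) ^ 2) ∧
      (∀ x : Fin n → ℝ, ξ 0 x = fh * Complex.exp (Complex.I * ((∑ j, α j * x j : ℝ)))) ∧
      (∀ x : Fin n → ℝ, deriv (fun s => ξ s x) 0 =
        gh * Complex.exp (Complex.I * ((∑ j, α j * x j : ℝ)))) := by
  have hβ : β₀ ≠ 0 := ne_of_gt hβ₀
  have hΔ : Δx ≠ 0 := ne_of_gt hΔx
  set c : ℝ → ℂ := fun s => fh * ((Real.cos (β₀ * s) : ℝ) : ℂ) +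
      gh * ((Real.sin (β₀ * s) / β₀ : ℝ) : ℂ) with hc_def
  set c' : ℝ → ℂ := fun s => fh * ((-(β₀ * Real.sin (β₀ * s)) : ℝ) : ℂ) +
      gh * ((Real.cos (β₀ * s) : ℝ) : ℂ) with hc'_def
  have hEx : ∀ x : Fin n → ℝ, ∀ t, ξ t x = Complex.exp (Complex.I * ((∑ j, α j * x j : ℝ))) * c t :=
    fun x t => hξ t x
  have hD1 : ∀ (x : Fin n → ℝ) (t : ℝ),
      HasDerivAt (fun s => ξ s x)
        (Complex.exp (Complex.I * ((∑ j, α j * x j : ℝ))) * c' t) t := by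
    intro x t
    have : HasDerivAt (fun s => Complex.exp (Complex.I * ((∑ j, α j * x j : ℝ))) * c s)
        (Complex.exp (Complex.I * ((∑ j, α j * x j : ℝ))) * c' t) t :=
      (aux_c1 β₀ hβ fh gh t).const_mul _
    exact this.congr_of_eventuallyEq (Filter.Eventually.of_forall fun s => (hEx x s))
  have hD2 : ∀ (x : Fin n → ℝ) (t : ℝ),
      HasDerivAt (fun s => Complex.exp (Complex.I * ((∑ j, α j * x j : ℝ))) * c' s)
        (-(β₀ : ℂ) ^ 2 * (Complex.exp (Complex.I * ((∑ j, α j * x j : ℝ))) * c t)) t := by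
    intro x t
    have := (aux_c2 β₀ hβ fh gh t).const_mul
      (Complex.exp (Complex.I * ((∑ j, α j * x j : ℝ))))
    refine this.congr_deriv ?_
    simp only [hc_def]
    ring
  refine ⟨?_, ?_, ?_⟩
  · intro x t
    have hderiv1 : (deriv fun s => ξ s x)
        = fun s => Complex.exp (Complex.I * ((∑ j, α j * x j : ℝ))) * c' s :=
      funext fun s => (hD1 x s).deriv
    have hLHS : iteratedDeriv 2 (fun s => ξ s x) t
        = -(β₀ : ℂ) ^ 2 * (Complex.exp (Complex.I * ((∑ j, α j * x j : ℝ))) * c t) := by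
      rw [iteratedDeriv_succ, iteratedDeriv_one, hderiv1]
      exact (hD2 x t).deriv
    rw [hLHS]
    have hshift : ∀ (k : Fin n) (ε : ℝ),
        (∑ j, α j * (x + ε • (Pi.single k 1 : Fin n → ℝ)) j)
          = (∑ j, α j * x j) + α k * ε := by
      intro k ε
      have : ∀ j, α j * (x + ε • (Pi.single k 1 : Fin n → ℝ)) j
          = α j * x j + (if j = k then α k * ε else 0) := by
        intro j
        by_cases h : j = k <;> simp [h, Pi.single_apply, mul_add, mul_comm]
      rw [Finset.sum_congr rfl fun j _ => this j, Finset.sum_add_distrib,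
        Finset.sum_ite_eq' Finset.univ k fun _ => α k * ε]
      simp
    have hterm : ∀ k : Fin n,
        (ξ t (x + Δx • (Pi.single k 1 : Fin n → ℝ)) - 2 * ξ t x +
            ξ t (x - Δx • (Pi.single k 1 : Fin n → ℝ))) / (Δx : ℂ) ^ 2
          = Complex.exp (Complex.I * ((∑ j, α j * x j : ℝ))) * c t *
              ((-(Real.sin (α k * Δx / 2) ^ 2 / (α k * Δx / 2) ^ 2 * (α k) ^ 2) : ℝ) : ℂ) := by
      intro k
      have h1 := hshift k Δx
      have h2 : (∑ j, α j * (x - Δx • (Pi.single k 1 : Fin n → ℝ)) j)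
          = (∑ j, α j * x j) + α k * (-Δx) := by
        have := hshift k (-Δx)
        simpa [sub_eq_add_neg, neg_smul] using this
      rw [hEx _ t, hEx _ t, hEx _ t, h1, h2]
      have hexp : ∀ a : ℝ, Complex.exp (Complex.I * (((∑ j, α j * x j) + a : ℝ)))
          = Complex.exp (Complex.I * ((∑ j, α j * x j : ℝ))) * Complex.exp ((a : ℝ) * Complex.I) := by
        intro a
        rw [← Complex.exp_add]
        push_cast
        ring_nf
      rw [hexp, hexp]
      have hkey : (Complex.exp ((α k * Δx : ℝ) * Complex.I) - 2 +
          Complex.exp ((α k * -Δx : ℝ) * Complex.I))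
          = ((-(Real.sin (α k * Δx / 2) ^ 2 / (α k * Δx / 2) ^ 2 * (α k) ^ 2) * Δx ^ 2 : ℝ) : ℂ) := by
        have e1 : ((α k * -Δx : ℝ) : ℂ) = -((α k * Δx : ℝ) : ℂ) := by push_cast; ring
        rw [Complex.exp_mul_I, e1, Complex.exp_mul_I, Complex.cos_neg, Complex.sin_neg,
          ← Complex.ofReal_cos, ← Complex.ofReal_sin]
        have hsin2 : Real.sin (α k * Δx / 2) ^ 2 = 1 / 2 - Real.cos (α k * Δx) / 2 := by
          have h := Real.sin_sq_eq_half_sub (α k * Δx / 2)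
          rw [h]
          ring_nf
        have hne : (α k * Δx / 2) ≠ 0 := by
          have hk := hα k
          positivity
        have hreal : Real.cos (α k * Δx) - 2 + Real.cos (α k * Δx)
            = -(Real.sin (α k * Δx / 2) ^ 2 / (α k * Δx / 2) ^ 2 * (α k) ^ 2) * Δx ^ 2 := by
          rw [hsin2]
          have hk := hα k
          field_simp
          ring
        rw [← hreal]
        push_cast
        ring
      have hΔ2 : ((Δx : ℂ)) ^ 2 ≠ 0 := pow_ne_zero 2 (Complex.ofReal_ne_zero.mpr hΔ)
      rw [div_eq_iff hΔ2]
      calc Complex.exp (Complex.I * ((∑ j, α j * x j : ℝ))) * Complex.exp (((α k * Δx : ℝ) : ℝ) * Complex.I) * c t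
            - 2 * (Complex.exp (Complex.I * ((∑ j, α j * x j : ℝ))) * c t)
            + Complex.exp (Complex.I * ((∑ j, α j * x j : ℝ))) * Complex.exp (((α k * -Δx : ℝ) : ℝ) * Complex.I) * c t
          = Complex.exp (Complex.I * ((∑ j, α j * x j : ℝ))) * c t *
              (Complex.exp ((α k * Δx : ℝ) * Complex.I) - 2 + Complex.exp ((α k * -Δx : ℝ) * Complex.I)) := by
            ring
        _ = _ := by rw [hkey]; push_cast; ring
    rw [Finset.sum_congr rfl fun k _ => hterm k, ← Finset.mul_sum]
    have hsum2 : (∑ k, ((-(Real.sin (α k * Δx / 2) ^ 2 / (α k * Δx / 2) ^ 2 * (α k) ^ 2) : ℝ) : ℂ))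
        = ((-β₀ ^ 2 : ℝ) : ℂ) := by
      norm_cast
      rw [hdisp, ← Finset.sum_neg_distrib]
    rw [hsum2]
    push_cast
    ring
  · intro x
    rw [hEx x 0]
    simp [hc_def, mul_comm]
  · intro x
    rw [(hD1 x 0).deriv]
    simp [hc'_def, mul_comm]
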